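/- Let M be a preference model with ⪰ transitive and smooth, v ∈ W, and A a finite set of formulas. If some u ≻ v satisfies a formula α ∈ A, then some element of MaxSeq(M, {u : u ≻ v}, A) satisfies α. -/

import Mathlib

/-- Formulas of Åqvist's dyadic deontic language. -/
inductive PForm (V : Type) : Type
  | var : V → PForm V
  | neg : PForm V → PForm V
  | conj : PForm V → PForm V → PForm V
  | box : PForm V → PForm V
  | ob : PForm V → PForm V → PForm V   -- `ob γ α` is ◯(γ/α)

/-- Strict version of a binary relation: `a ≻ b` iff `a ⪰ b` and `¬ b ⪰ a`. -/
def strictRel {W : Type} (r : W → W → Prop) (a b : W) : Prop := r a b ∧ ¬ r b a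

/-- ≻-maximal elements of a set `U`. -/
def maxSet {W : Type} (r : W → W → Prop) (U : Set W) : Set W :=
  {v | v ∈ U ∧ ¬ ∃ u ∈ U, strictRel r u v}

/-- A preference model. -/
structure PrefModel (V : Type) : Type 1 where
  W : Type
  rel : W → W → Prop
  val : V → Set W

/-- Truth set of a formula in a preference model. -/
def truthSet {V : Type} (M : PrefModel V) : PForm V → Set M.W
  | .var x => M.val x
  | .neg ψ => (truthSet M ψ)ᶜ
  | .conj ψ₁ ψ₂ => truthSet M ψ₁ ∩ truthSet M ψ₂
  | .box β => {_w | truthSet M β = Set.univ}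
  | .ob γ α => {_w | maxSet M.rel (truthSet M α) ⊆ truthSet M γ}

/-- A model validates a formula when it is true at all worlds. -/
def valid {V : Type} (M : PrefModel V) (φ : PForm V) : Prop :=
  truthSet M φ = Set.univ

/-- Limitedness of a preference model. -/
def Limited {V : Type} (M : PrefModel V) : Prop :=
  ∀ α : PForm V, (truthSet M α).Nonempty → (maxSet M.rel (truthSet M α)).Nonempty

/-- Smoothness of a preference model. -/
def SmoothModel {V : Type} (M : PrefModel V) : Prop :=
  ∀ (α : PForm V) (w : M.W), w ∈ truthSet M α →
    ∃ u ∈ maxSet M.rel (truthSet M α), u = w ∨ strictRel M.rel u w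

/-- Subformulas of a formula (including the formula itself). -/
def Subf {V : Type} : PForm V → Set (PForm V)
  | .var x => {.var x}
  | .neg ψ => insert (.neg ψ) (Subf ψ)
  | .conj ψ₁ ψ₂ => insert (.conj ψ₁ ψ₂) (Subf ψ₁ ∪ Subf ψ₂)
  | .box β => insert (.box β) (Subf β)
  | .ob γ α => insert (.ob γ α) (Subf γ ∪ Subf α)

open scoped Classical in
/-- The iterative selection of maximal worlds for disjunctions of remaining conditions. -/
noncomputable def maxSeq {V : Type} (M : PrefModel V) (rep : Set M.W → M.W)
    (hrep : ∀ S : Set M.W, S.Nonempty → rep S ∈ S)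
    (U : Set M.W) (A : Finset (PForm V)) : List M.W :=
  if h : (U ∩ maxSet M.rel (⋃ α ∈ A, truthSet M α)).Nonempty then
    rep (U ∩ maxSet M.rel (⋃ α ∈ A, truthSet M α)) ::
      maxSeq M rep hrep U
        (A.filter fun α =>
          rep (U ∩ maxSet M.rel (⋃ α ∈ A, truthSet M α)) ∉ truthSet M α)
  else []
termination_by A.card
decreasing_by
  have hz := hrep _ h
  have hz2 : rep (U ∩ maxSet M.rel (⋃ α ∈ A, truthSet M α)) ∈ ⋃ α ∈ A, truthSet M α :=
    hz.2.1
  simp only [Set.mem_iUnion] at hz2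
  obtain ⟨α₀, hα₀A, hα₀⟩ := hz2
  exact Finset.card_lt_card
    (Finset.filter_ssubset.mpr ⟨α₀, hα₀A, by simp [hα₀]⟩)

lemma exists_disj {V : Type} (M : PrefModel V) (A : Finset (PForm V)) (hA : A.Nonempty) :
    ∃ φ : PForm V, truthSet M φ = ⋃ α ∈ A, truthSet M α := by
  induction hA using Finset.Nonempty.cons_induction with
  | singleton a => exact ⟨a, by simp⟩
  | cons a s ha hs ih =>
    obtain ⟨φ, hφ⟩ := ih
    refine ⟨.neg (.conj (.neg a) (.neg φ)), ?_⟩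
    simp only [truthSet, Set.compl_inter, compl_compl, hφ]
    ext x; simp [Finset.mem_cons, or_and_right, Set.mem_iUnion]

lemma strict_trans {W : Type} {r : W → W → Prop} (h : Transitive r) {a b c : W}
    (hab : strictRel r a b) (hbc : strictRel r b c) : strictRel r a c :=
  ⟨h hab.1 hbc.1, fun hca => hbc.2 (h hca hab.1)⟩

lemma stmt16_aux {V : Type} (M : PrefModel V)
    (htrans : Transitive M.rel) (hsmooth : SmoothModel M)
    (rep : Set M.W → M.W) (hrep : ∀ S : Set M.W, S.Nonempty → rep S ∈ S)
    (v : M.W) (α : PForm V) :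
    ∀ n (A : Finset (PForm V)), A.card = n → α ∈ A →
    (∃ u : M.W, strictRel M.rel u v ∧ u ∈ truthSet M α) →
    ∃ z ∈ maxSeq M rep hrep {u | strictRel M.rel u v} A, z ∈ truthSet M α := by
  intro n
  induction n using Nat.strong_induction_on with
  | _ n ih =>
  intro A hcard hα ⟨u, huv, huα⟩
  classical
  have huU : u ∈ ⋃ β ∈ A, truthSet M β := Set.mem_biUnion hα huα
  obtain ⟨φ, hφ⟩ := exists_disj M A ⟨α, hα⟩
  obtain ⟨u', hu'max, hu'⟩ := hsmooth φ u (by rw [hφ]; exact huU)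
  rw [hφ] at hu'max
  have hu'v : strictRel M.rel u' v := by
    rcases hu' with rfl | h'; · exact huv
    · exact strict_trans htrans h' huv
  have hne : ({u | strictRel M.rel u v} ∩ maxSet M.rel (⋃ β ∈ A, truthSet M β)).Nonempty :=
    ⟨u', hu'v, hu'max⟩
  rw [maxSeq, dif_pos hne]
  set z := rep ({u | strictRel M.rel u v} ∩ maxSet M.rel (⋃ β ∈ A, truthSet M β)) with hzdef
  by_cases hzα : z ∈ truthSet M α
  · exact ⟨z, List.mem_cons_self, hzα⟩
  · have hαf : α ∈ A.filter (fun β => z ∉ truthSet M β) :=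
      Finset.mem_filter.mpr ⟨hα, hzα⟩
    have hlt : (A.filter (fun β => z ∉ truthSet M β)).card < n := by
      subst hcard
      have hz := hrep _ hne
      have hz2 : z ∈ ⋃ β ∈ A, truthSet M β := hz.2.1
      simp only [Set.mem_iUnion] at hz2
      obtain ⟨β, hβA, hβ⟩ := hz2
      exact Finset.card_lt_card (Finset.filter_ssubset.mpr ⟨β, hβA, by simp [hβ]⟩)
    obtain ⟨z', hz'mem, hz'α⟩ := ih _ hlt _ rfl hαf ⟨u, huv, huα⟩
    exact ⟨z', List.mem_cons_of_mem _ hz'mem, hz'α⟩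

/-- In a transitive smooth model, if some `u ≻ v` satisfies `α ∈ A`, then some element of
the maximal chain selected from `{u : u ≻ v}` satisfies `α`. -/
theorem stmt16 {V : Type} (M : PrefModel V)
    (htrans : Transitive M.rel) (hsmooth : SmoothModel M)
    (rep : Set M.W → M.W) (hrep : ∀ S : Set M.W, S.Nonempty → rep S ∈ S)
    (v : M.W) (A : Finset (PForm V)) (α : PForm V) (hα : α ∈ A)
    (h : ∃ u : M.W, strictRel M.rel u v ∧ u ∈ truthSet M α) :
    ∃ z ∈ maxSeq M rep hrep {u | strictRel M.rel u v} A, z ∈ truthSet M α :=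
  stmt16_aux M htrans hsmooth rep hrep v α A.card A rfl hα h
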